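/- For every M > 0 there exists a finite poset P such that χ_D(G_P) − χ_D(P) > M, where G_P is the comparability graph of P. Specifically, for j ≥ 3, the poset P consisting of C(2j, j) disjoint j-chains satisfies χ_D(P) ≤ j+1 while χ_D(G_P) = 2j. -/

import Mathlib

/-- A coloring `c` of a poset is distinguishing if the only color-preserving
order-automorphism is the identity. -/
def IsDistinguishing {α : Type*} [PartialOrder α] {C : Type*} (c : α → C) : Prop :=
  ∀ φ : α ≃o α, (∀ x, c (φ x) = c x) → ∀ x, φ x = x

/-- The distinguishing chromatic number of a poset. -/
noncomputable def chiD (α : Type*) [PartialOrder α] : ℕ :=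
  sInf {k | ∃ c : α → Fin k, (∀ x y : α, x < y → c x ≠ c y) ∧ IsDistinguishing c}

/-- The comparability graph of a poset. -/
def compGraph (α : Type*) [PartialOrder α] : SimpleGraph α where
  Adj x y := x ≠ y ∧ (x ≤ y ∨ y ≤ x)
  symm := by
    constructor
    rintro x y ⟨hne, h⟩
    exact ⟨hne.symm, h.symm⟩
  loopless := by constructor; rintro x ⟨hne, -⟩; exact hne rfl

/-- The distinguishing chromatic number of a graph: least number of colors in a proper
coloring such that the only color-preserving graph automorphism is the identity. -/
noncomputable def graphChiD {V : Type*} (G : SimpleGraph V) : ℕ :=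
  sInf {k | ∃ c : V → Fin k, (∀ x y : V, G.Adj x y → c x ≠ c y) ∧
    ∀ φ : G ≃g G, (∀ x, c (φ x) = c x) → ∀ x, φ x = x}


lemma auxA : ∀ j : ℕ, 3 ≤ j → (2*j).choose j ≤ Nat.factorial (j+1) := by
  intro j hj
  induction j, hj using Nat.le_induction with
  | base => decide
  | succ n hn ih =>
    have key := Nat.succ_mul_centralBinom_succ n
    simp only [Nat.centralBinom] at key
    have h4 : (2*(n+1)).choose (n+1) ≤ 4 * (2*n).choose n := by
      have : (n+1) * ((2*(n+1)).choose (n+1)) ≤ (n+1) * (4 * (2*n).choose n) := by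
        rw [show 2*(n+1) = 2*n+1+1 by ring] at key ⊢
        calc (n+1) * ((2*n+1+1).choose (n+1)) = 2*(2*n+1) * (2*n).choose n := key
          _ ≤ (n+1) * (4 * (2*n).choose n) := by nlinarith [Nat.choose_pos (show n ≤ 2*n by omega)]
      exact Nat.le_of_mul_le_mul_left this (by omega)
    calc (2*(n+1)).choose (n+1) ≤ 4 * (2*n).choose n := h4
      _ ≤ 4 * Nat.factorial (n+1) := by omega
      _ ≤ (n+2) * Nat.factorial (n+1) := by
          have := Nat.factorial_pos (n+1); nlinarith
      _ = Nat.factorial (n+2) := rfl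

lemma auxB (j k : ℕ) (hj : 1 ≤ j) (hk : k < 2*j) : k.choose j < (2*j).choose j := by
  have h1 : (2*j).choose j = (2*j-1).choose (j-1) + (2*j-1).choose j := by
    rw [show 2*j = (2*j-1)+1 by omega]
    rw [show (2*j-1+1).choose j = (2*j-1+1).choose ((j-1)+1) by congr 1; omega]
    rw [Nat.choose_succ_succ]
    congr 2 <;> omega
  have h2 : 0 < (2*j-1).choose (j-1) := Nat.choose_pos (by omega)
  have h3 : k.choose j ≤ (2*j-1).choose j := Nat.choose_le_choose j (by omega)
  omega


variable {N j : ℕ}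

abbrev PP (N j : ℕ) := Σ _ : Fin N, Fin j

lemma sig_le_iff {a b : Fin N} {x y : Fin j} :
    (⟨a,x⟩ : PP N j) ≤ ⟨b,y⟩ ↔ a = b ∧ x ≤ y := by
  constructor
  · intro h
    cases h
    exact ⟨rfl, by assumption⟩
  · rintro ⟨rfl, h⟩
    exact Sigma.LE.fiber _ _ _ h

lemma sig_lt_iff {a b : Fin N} {x y : Fin j} :
    (⟨a,x⟩ : PP N j) < ⟨b,y⟩ ↔ a = b ∧ x < y := by
  constructor
  · intro h
    cases h
    exact ⟨rfl, by assumption⟩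
  · rintro ⟨rfl, h⟩
    exact Sigma.LT.fiber _ _ _ h

lemma strictMono_fin_id {f : Fin j → Fin j} (hf : StrictMono f) : ∀ x, f x = x := by
  have hb : Function.Bijective f := (Finite.injective_iff_bijective).1 hf.injective
  have hr : Set.range f = Set.range (id : Fin j → Fin j) := by
    simp [Set.range_eq_univ.2 hb.2]
  have hwf : WellFoundedLT (Fin j) := inferInstance
  have := (StrictMono.range_inj hf strictMono_id).1 hr
  intro x; exact congrFun this x


lemma adj_iff {p q : PP N j} : (compGraph (PP N j)).Adj p q ↔ p.1 = q.1 ∧ p ≠ q := by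
  obtain ⟨a,x⟩ := p; obtain ⟨b,y⟩ := q
  constructor
  · rintro ⟨hne, h | h⟩
    · rw [sig_le_iff] at h; exact ⟨h.1, hne⟩
    · rw [sig_le_iff] at h; exact ⟨h.1.symm, hne⟩
  · rintro ⟨rfl, hne⟩
    have hxy : x ≠ y := by rintro rfl; exact hne rfl
    refine ⟨hne, ?_⟩
    rcases le_total x y with h | h
    · exact Or.inl (sig_le_iff.2 ⟨rfl, h⟩)
    · exact Or.inr (sig_le_iff.2 ⟨rfl, h⟩)


lemma sig_le_fst {p q : PP N j} (h : p ≤ q) : p.1 = q.1 := by cases h; rfl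

lemma sig_lt_elim {p q : PP N j} (h : p < q) : p.1 = q.1 ∧ p.2 < q.2 := by
  obtain ⟨a,x⟩ := p; obtain ⟨b,y⟩ := q; rw [sig_lt_iff] at h; exact ⟨h.1, h.2⟩

lemma poset_upper (N j : ℕ) (hN : N ≤ Nat.factorial (j+1)) :
    ∃ c : PP N j → Fin (j+1), (∀ x y : PP N j, x < y → c x ≠ c y) ∧ IsDistinguishing c := by
  have hcard : Fintype.card (Fin N) ≤ Fintype.card (Fin j ↪ Fin (j+1)) := by
    rw [Fintype.card_embedding_eq]
    simp only [Fintype.card_fin]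
    have h1 : (j+1).descFactorial (j+1) = (j+1-j) * (j+1).descFactorial j :=
      Nat.descFactorial_succ (j+1) j
    rw [Nat.descFactorial_self] at h1
    simp only [Fintype.card_fin, show j+1-j = 1 by omega, one_mul] at h1
    omega
  obtain ⟨f⟩ := Function.Embedding.nonempty_iff_card_le.2 hcard
  refine ⟨fun p => f p.1 p.2, ?_, ?_⟩
  · intro p q h
    obtain ⟨h1, h2⟩ := sig_lt_elim h
    simp only []
    rw [← h1]
    exact fun hc => absurd ((f p.1).injective hc) (ne_of_lt h2)
  · intro φ hc p
    -- first components of images are constant along a fiber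
    have fstconst : ∀ (a : Fin N) (x y : Fin j), (φ ⟨a,x⟩).1 = (φ ⟨a,y⟩).1 := by
      intro a x y
      rcases le_total x y with h | h
      · exact sig_le_fst (φ.le_iff_le.2 (sig_le_iff.2 ⟨rfl, h⟩))
      · exact (sig_le_fst (φ.le_iff_le.2 (sig_le_iff.2 ⟨rfl, h⟩))).symm
    -- second components are fixed
    have sndid : ∀ (a : Fin N) (x : Fin j), (φ ⟨a,x⟩).2 = x := by
      intro a
      have hm : StrictMono (fun x : Fin j => (φ ⟨a,x⟩).2) := by
        intro x y hxy
        exact (sig_lt_elim (φ.lt_iff_lt.2 (sig_lt_iff.2 ⟨rfl, hxy⟩))).2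
      exact strictMono_fin_id hm
    obtain ⟨a, x⟩ := p
    have heta : ∀ (y : Fin j), φ ⟨a,y⟩ = ⟨(φ ⟨a,y⟩).1, y⟩ := by
      intro y
      conv_lhs => rw [← Sigma.eta (φ ⟨a,y⟩)]
      rw [sndid]
    have hcol : ∀ y : Fin j, f ((φ ⟨a,x⟩).1) y = f a y := by
      intro y
      have := hc ⟨a, y⟩
      rw [heta y, fstconst a y x] at this
      exact this
    have hfa : f ((φ ⟨a,x⟩).1) = f a := by
      ext y
      exact congrArg Fin.val (hcol y)
    have : (φ ⟨a,x⟩).1 = a := f.injective hfa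
    rw [heta x, this]

lemma graph_upper (N j : ℕ) (hj : 1 ≤ j) (hN : N ≤ (2*j).choose j) :
    ∃ c : PP N j → Fin (2*j), (∀ p q : PP N j, (compGraph (PP N j)).Adj p q → c p ≠ c q) ∧
      ∀ φ : compGraph (PP N j) ≃g compGraph (PP N j),
        (∀ x, c (φ x) = c x) → ∀ x, φ x = x := by
  have hcard : Fintype.card (Fin N) ≤ Fintype.card {s : Finset (Fin (2*j)) // s.card = j} := by
    rw [Fintype.card_finset_len]
    simpa using hN
  obtain ⟨g⟩ := Function.Embedding.nonempty_iff_card_le.2 hcard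
  set c : PP N j → Fin (2*j) := fun p => ((g p.1).1.orderIsoOfFin (g p.1).2 p.2 : Fin (2*j))
    with hcdef
  have cinj : ∀ a : Fin N, Function.Injective (fun x : Fin j => c ⟨a,x⟩) := by
    intro a x y hxy
    exact ((g a).1.orderIsoOfFin (g a).2).injective (Subtype.coe_injective hxy)
  have cimage : ∀ a : Fin N,
      Finset.image (fun x : Fin j => c ⟨a,x⟩) Finset.univ = (g a).1 := by
    intro a
    ext b
    simp only [Finset.mem_image, Finset.mem_univ, true_and]
    constructor
    · rintro ⟨x, rfl⟩; exact ((g a).1.orderIsoOfFin (g a).2 x).2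
    · intro hb
      refine ⟨((g a).1.orderIsoOfFin (g a).2).symm ⟨b, hb⟩, ?_⟩
      show ((((g a).1.orderIsoOfFin (g a).2) (((g a).1.orderIsoOfFin (g a).2).symm ⟨b, hb⟩) : Fin (2*j))) = b
      rw [OrderIso.apply_symm_apply]
  refine ⟨c, ?_, ?_⟩
  · intro p q hadj
    obtain ⟨h1, h2⟩ := adj_iff.1 hadj
    obtain ⟨a,x⟩ := p; obtain ⟨b,y⟩ := q
    cases h1
    have hxy : x ≠ y := fun h => h2 (by rw [h])
    exact fun hcc => hxy (cinj a hcc)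
  · intro φ hc p
    have fstconst : ∀ (a : Fin N) (x y : Fin j), (φ ⟨a,x⟩).1 = (φ ⟨a,y⟩).1 := by
      intro a x y
      by_cases hxy : x = y
      · rw [hxy]
      · have hadj : (compGraph (PP N j)).Adj ⟨a,x⟩ ⟨a,y⟩ :=
          adj_iff.2 ⟨rfl, by simp [hxy]⟩
        exact (adj_iff.1 (φ.map_adj_iff.2 hadj)).1
    obtain ⟨a, x⟩ := p
    set h : Fin j → Fin j := fun y => (φ ⟨a,y⟩).2 with hhdef
    have heta : ∀ (y : Fin j), φ ⟨a,y⟩ = ⟨(φ ⟨a,x⟩).1, h y⟩ := by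
      intro y
      conv_lhs => rw [← Sigma.eta (φ ⟨a,y⟩)]
      rw [fstconst a y x]
    have hinj : Function.Injective h := by
      intro u v huv
      have : φ ⟨a,u⟩ = φ ⟨a,v⟩ := by rw [heta u, heta v, huv]
      have := φ.injective this
      simpa using this
    have hsurj : Function.Surjective h := Finite.injective_iff_surjective.1 hinj
    have himg : Finset.image (fun y : Fin j => c ⟨(φ ⟨a,x⟩).1, y⟩) Finset.univ
        = Finset.image (fun y : Fin j => c ⟨a,y⟩) Finset.univ := by
      have h1 : (Finset.univ : Finset (Fin j)).image h = Finset.univ :=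
        Finset.image_univ_of_surjective hsurj
      conv_lhs => rw [← h1, Finset.image_image]
      apply Finset.image_congr
      intro y _
      have := hc ⟨a, y⟩
      rw [heta y] at this
      exact this
    have hga : g ((φ ⟨a,x⟩).1) = g a := by
      apply Subtype.ext
      rw [← cimage, ← cimage, himg]
    have hfst : (φ ⟨a,x⟩).1 = a := g.injective hga
    have hcx : c ⟨a, h x⟩ = c ⟨a, x⟩ := by
      have := hc ⟨a, x⟩
      rw [heta x, hfst] at this
      exact this
    rw [heta x, hfst, cinj a hcx]

lemma graph_lower (N j k : ℕ) (hj : 3 ≤ j) (hNk : k.choose j < N)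
    (c : PP N j → Fin k)
    (hproper : ∀ p q : PP N j, (compGraph (PP N j)).Adj p q → c p ≠ c q)
    (hdist : ∀ φ : compGraph (PP N j) ≃g compGraph (PP N j),
      (∀ x, c (φ x) = c x) → ∀ x, φ x = x) : False := by
  have cinj : ∀ a : Fin N, Function.Injective (fun x : Fin j => c ⟨a,x⟩) := by
    intro a x y hxy
    by_contra hne
    exact hproper ⟨a,x⟩ ⟨a,y⟩ (adj_iff.2 ⟨rfl, by simp [hne]⟩) hxy
  set F : Fin N → {s : Finset (Fin k) // s.card = j} := fun a =>
    ⟨Finset.image (fun x : Fin j => c ⟨a,x⟩) Finset.univ, by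
      rw [Finset.card_image_of_injective _ (cinj a), Finset.card_univ, Fintype.card_fin]⟩
    with hFdef
  have hFnotinj : ¬ Function.Injective F := by
    intro hinj
    have := Fintype.card_le_of_injective F hinj
    rw [Fintype.card_finset_len, Fintype.card_fin, Fintype.card_fin] at this
    omega
  rw [Function.not_injective_iff] at hFnotinj
  obtain ⟨a, b, hFab, hab⟩ := hFnotinj
  set u : Fin j → Fin k := fun x => c ⟨a,x⟩ with hudef
  set v : Fin j → Fin k := fun x => c ⟨b,x⟩ with hvdef
  have hu : Function.Injective u := cinj a
  have hv : Function.Injective v := cinj b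
  have hr : Set.range u = Set.range v := by
    have h1 := congrArg (fun s => ((s : {s : Finset (Fin k) // s.card = j}) : Finset (Fin k)))
      hFab
    simp only [hFdef] at h1
    have h2 : (↑(Finset.image (fun x : Fin j => c ⟨a,x⟩) Finset.univ) : Set (Fin k))
        = (↑(Finset.image (fun x : Fin j => c ⟨b,x⟩) Finset.univ) : Set (Fin k)) := by
      rw [h1]
    simpa [Finset.coe_image, Set.image_univ, hudef, hvdef] using h2
  set e : Fin j ≃ Fin j :=
    (Equiv.ofInjective u hu).trans ((Equiv.setCongr hr).trans (Equiv.ofInjective v hv).symm)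
    with hedef
  have hve : ∀ x, v (e x) = u x := by
    intro x
    have h1 := Equiv.apply_ofInjective_symm hv
      (Equiv.setCongr hr (Equiv.ofInjective u hu x))
    simpa [hedef] using h1
  -- the swap map
  set f : PP N j → PP N j := fun p =>
    if p.1 = a then ⟨b, e p.2⟩ else if p.1 = b then ⟨a, e.symm p.2⟩ else p with hfdef
  have hinv : Function.Involutive f := by
    rintro ⟨i,x⟩
    by_cases h1 : i = a
    · subst h1
      simp [hfdef, hab.symm, Ne.symm hab]
    · by_cases h2 : i = b
      · subst h2
        simp [hfdef, hab, Ne.symm hab, h1]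
      · simp [hfdef, h1, h2]
  have hfst : ∀ p : PP N j, (f p).1 = Equiv.swap a b p.1 := by
    rintro ⟨i,x⟩
    by_cases h1 : i = a
    · subst h1; simp [hfdef, Equiv.swap_apply_left]
    · by_cases h2 : i = b
      · subst h2; simp [hfdef, h1, Equiv.swap_apply_right]
      · simp [hfdef, h1, h2, Equiv.swap_apply_of_ne_of_ne h1 h2]
  set φ : compGraph (PP N j) ≃g compGraph (PP N j) :=
    { toEquiv := hinv.toPerm
      map_rel_iff' := by
        intro p q
        show (compGraph (PP N j)).Adj (f p) (f q) ↔ (compGraph (PP N j)).Adj p q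
        rw [adj_iff, adj_iff, hfst, hfst]
        constructor
        · rintro ⟨h1, h2⟩
          exact ⟨(Equiv.swap a b).injective h1, fun h => h2 (by rw [h])⟩
        · rintro ⟨h1, h2⟩
          exact ⟨by rw [h1], fun h => h2 (hinv.injective h)⟩ } with hphidef
  have hcpres : ∀ p, c (φ p) = c p := by
    rintro ⟨i,x⟩
    show c (f ⟨i,x⟩) = c ⟨i,x⟩
    by_cases h1 : i = a
    · subst h1
      simp only [hfdef, if_pos rfl]
      exact hve x
    · by_cases h2 : i = b
      · subst h2
        simp only [hfdef, if_neg h1, if_pos rfl]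
        have := hve (e.symm x)
        rw [e.apply_symm_apply] at this
        exact this.symm
      · simp [hfdef, h1, h2]
  have hx0 : (0 : ℕ) < j := by omega
  have := hdist φ hcpres ⟨a, ⟨0, hx0⟩⟩
  have hfst0 : (φ ⟨a, ⟨0, hx0⟩⟩).1 = b := by
    show (f ⟨a, ⟨0, hx0⟩⟩).1 = b
    simp [hfdef]
  rw [this] at hfst0
  exact hab hfst0

/-- The gap between the distinguishing chromatic number of a poset and that
of its comparability graph can be arbitrarily large.  Specifically, for `j ≥ 3`, the
poset `P` consisting of `C(2j, j)` disjoint `j`-chains satisfies `χ_D(P) ≤ j + 1` while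
`χ_D(G_P) = 2j`; in particular, for every `M > 0` there is a finite poset `P` with
`χ_D(G_P) - χ_D(P) > M`. -/
theorem chiD_comparability_gap :
    (∀ j : ℕ, 3 ≤ j →
      chiD (Σ _ : Fin ((2 * j).choose j), Fin j) ≤ j + 1 ∧
      graphChiD (compGraph (Σ _ : Fin ((2 * j).choose j), Fin j)) = 2 * j) ∧
    (∀ M : ℕ, 0 < M → ∃ (α : Type) (inst : PartialOrder α) (_ : Fintype α),
      M < @graphChiD α (@compGraph α inst) - @chiD α inst) := by
  have main : ∀ j : ℕ, 3 ≤ j →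
      chiD (Σ _ : Fin ((2 * j).choose j), Fin j) ≤ j + 1 ∧
      graphChiD (compGraph (Σ _ : Fin ((2 * j).choose j), Fin j)) = 2 * j := by
    intro j hj
    set N := (2*j).choose j with hNdef
    constructor
    · obtain ⟨c, h1, h2⟩ := poset_upper N j (auxA j hj)
      exact Nat.sInf_le ⟨c, h1, h2⟩
    · obtain ⟨c, h1, h2⟩ := graph_upper N j (by omega) le_rfl
      have hmem : 2*j ∈ {k | ∃ c : PP N j → Fin k,
          (∀ x y : PP N j, (compGraph (PP N j)).Adj x y → c x ≠ c y) ∧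
          ∀ φ : compGraph (PP N j) ≃g compGraph (PP N j),
            (∀ x, c (φ x) = c x) → ∀ x, φ x = x} := ⟨c, h1, h2⟩
      have hub : graphChiD (compGraph (PP N j)) ≤ 2*j := Nat.sInf_le hmem
      have hlb : 2*j ≤ graphChiD (compGraph (PP N j)) := by
        by_contra h
        push_neg at h
        obtain ⟨c', hp', hd'⟩ := Nat.sInf_mem (⟨2*j, hmem⟩ : Set.Nonempty _)
        exact graph_lower N j (graphChiD (compGraph (PP N j))) hj
          (hNdef ▸ auxB j _ (by omega) h) c' hp' hd'
      exact le_antisymm hub hlb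
  refine ⟨main, ?_⟩
  intro M hM
  obtain ⟨h1, h2⟩ := main (M+2) (by omega)
  exact ⟨(Σ _ : Fin ((2*(M+2)).choose (M+2)), Fin (M+2)), inferInstance, inferInstance,
    by omega⟩
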